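/- Let δ be a power of a prime p and q = δ^m with m ≥ 2. The narrow-sense antiprimitive BCH code C over GF(q) of length q+1, defined as C = {c ∈ GF(q)^{U_{q+1}} : Σ_{u ∈ U_{q+1}} c_u u^i = 0 for all i with 1 ≤ |i| ≤ δ-1}, has dimension q - 2δ + 3 over GF(q). -/

import Mathlib

open scoped BigOperators

/-- The parity-check linear map `c ↦ ∑_{u ∈ U_{q+1}} c_u u^i` for the BCH code,
with coordinates indexed by the group `U` of `(q+1)`-th roots of unity in `GF(q²)`. -/
noncomputable def bchMap (q : ℕ) (F K : Type*) [Field F] [Field K] [Fintype K]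
    [Algebra F K] (i : ℤ) :
    ({x : K // x ^ (q + 1) = 1} → F) →ₗ[F] K :=
  letI : Fintype {x : K // x ^ (q + 1) = 1} := Fintype.ofFinite _
  ∑ u : {x : K // x ^ (q + 1) = 1},
    ((u : K) ^ i) • ((Algebra.linearMap F K).comp (LinearMap.proj u))

/-- The narrow-sense antiprimitive BCH code `C_{(q, q+1, δ, 1)}`:
all vectors `(c_u)_{u ∈ U_{q+1}}` over `GF(q)` with `∑_u c_u u^i = 0` for `1 ≤ |i| ≤ δ-1`. -/
noncomputable def bchCode (q δ : ℕ) (F K : Type*) [Field F] [Field K] [Fintype K]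
    [Algebra F K] : Submodule F ({x : K // x ^ (q + 1) = 1} → F) :=
  ⨅ i ∈ {i : ℤ | 1 ≤ |i| ∧ |i| ≤ (δ : ℤ) - 1}, LinearMap.ker (bchMap q F K i)

open Polynomial in
private lemma bch_card_roots (K : Type*) [Field K] [Fintype K] (q : ℕ) (hq : 2 ≤ q)
    (hK : Fintype.card K = q ^ 2) : Nat.card {x : K // x ^ (q + 1) = 1} = q + 1 := by
  classical
  obtain ⟨g, hg⟩ := IsCyclic.exists_generator (α := Kˣ)
  have horder : orderOf g = q ^ 2 - 1 := by
    rw [orderOf_eq_card_of_forall_mem_zpowers hg, Nat.card_eq_fintype_card,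
      Fintype.card_units, hK]
  have hfact : q ^ 2 - 1 = (q + 1) * (q - 1) := by
    have h1 : 1 ≤ q := by omega
    have h2 : 1 ≤ q ^ 2 := Nat.one_le_pow _ _ (by omega)
    zify [h1, h2]; ring
  have hζord : orderOf (g ^ (q - 1)) = q + 1 := by
    rw [orderOf_pow, horder, hfact, Nat.gcd_eq_right (dvd_mul_left _ _),
      Nat.mul_div_cancel _ (by omega)]
  have hprim : IsPrimitiveRoot ((g ^ (q - 1) : Kˣ) : K) (q + 1) :=
    IsPrimitiveRoot.coe_units_iff.mpr (hζord ▸ IsPrimitiveRoot.orderOf _)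
  have hcard := hprim.card_nthRootsFinset
  have hmem : ∀ x : K, x ^ (q + 1) = 1 ↔ x ∈ nthRootsFinset (q + 1) (1 : K) := by
    intro x; rw [mem_nthRootsFinset (by omega)]
  calc Nat.card {x : K // x ^ (q + 1) = 1}
      = Nat.card {x : K // x ∈ nthRootsFinset (q + 1) (1 : K)} :=
        Nat.card_congr (Equiv.subtypeEquivRight hmem)
    _ = q + 1 := by rw [Nat.card_eq_fintype_card, Fintype.card_coe, hcard]

private lemma bch_charP (p r m q : ℕ) (hp : p.Prime) (hrm : 0 < r * m)
    (hq : q = p ^ (r * m)) (K : Type*) [Field K] [Fintype K]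
    (hK : Fintype.card K = q ^ 2) : CharP K p := by
  have h0 : ((q ^ 2 : ℕ) : K) = 0 := by rw [← hK]; exact FiniteField.cast_card_eq_zero K
  have h1 : ((p : K)) ^ (r * m * 2) = 0 := by
    rw [hq] at h0
    push_cast at h0
    rw [← pow_mul] at h0
    exact h0
  have h2 : (p : K) = 0 := pow_eq_zero_iff (n := r * m * 2) (by positivity) |>.mp h1
  have h3 : ringChar K ∣ p := ringChar.dvd h2
  have h4 : ringChar K = p := by
    rcases (Nat.Prime.eq_one_or_self_of_dvd hp _ h3) with h | h
    · exact absurd h (CharP.ringChar_ne_one)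
    · exact h
  exact h4 ▸ ringChar.charP K

open Polynomial in
private lemma bch_trace (q : ℕ) (hq : 4 ≤ q) (F K : Type*) [Field F] [Fintype F] [Field K]
    [Fintype K] [Algebra F K] (hF : Fintype.card F = q) (hK : Fintype.card K = q ^ 2)
    (frobK : ∀ x y : K, (x + y) ^ q = x ^ q + y ^ q) :
    ∃ t : K →ₗ[F] F, ∀ z : K, algebraMap F K (t z) = z + z ^ q := by
  classical
  have hinj : Function.Injective (algebraMap F K) := RingHom.injective _
  have hFq : ∀ a : F, a ^ q = a := fun a => by rw [← hF]; exact FiniteField.pow_card a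
  have hfixed : ∀ y : K, y ^ q = y → ∃ a : F, algebraMap F K a = y := by
    intro y hy
    by_contra hcon
    push_neg at hcon
    set s : Finset K := Finset.univ.image (algebraMap F K) with hs
    have hscard : s.card = q := by
      rw [hs, Finset.card_image_of_injective _ hinj, Finset.card_univ, hF]
    have hys : y ∉ s := by
      simp only [hs, Finset.mem_image, Finset.mem_univ, true_and]
      rintro ⟨a, ha⟩; exact hcon a ha
    have hzero : (X ^ q - X : K[X]) = 0 := by
      apply eq_zero_of_natDegree_lt_card_of_eval_eq_zero' _ (insert y s)
      · intro i hi
        rcases Finset.mem_insert.mp hi with rfl | hi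
        · simp [hy]
        · simp only [hs, Finset.mem_image, Finset.mem_univ, true_and] at hi
          obtain ⟨a, rfl⟩ := hi
          simp [← map_pow, hFq a]
      · have : natDegree (X ^ q - X : K[X]) ≤ q := by
          refine (natDegree_sub_le _ _).trans ?_
          simp only [natDegree_X_pow, natDegree_X, max_le_iff]
          omega
        rw [Finset.card_insert_of_notMem hys, hscard]; omega
    have hcoe : ((X ^ q - X : K[X]).coeff q) = 1 := by
      rw [coeff_sub, coeff_X_pow, if_pos rfl, coeff_X, if_neg (by omega)]; ring
    rw [hzero] at hcoe
    simp at hcoe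
  have hKq2 : ∀ x : K, x ^ (q * q) = x := fun x => by
    have h := FiniteField.pow_card x
    rwa [hK, pow_two] at h
  have hfix2 : ∀ z : K, ∃ a : F, algebraMap F K a = z + z ^ q := by
    intro z
    refine hfixed _ ?_
    rw [frobK, ← pow_mul, hKq2, add_comm]
  choose f hf using hfix2
  refine ⟨{ toFun := f, map_add' := ?_, map_smul' := ?_ }, hf⟩
  · intro x y
    apply hinj
    rw [map_add, hf, hf, hf, frobK]; ring
  · intro a x
    apply hinj
    rw [RingHom.id_apply, hf, smul_eq_mul, map_mul, Algebra.smul_def, mul_pow,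
      ← map_pow, hFq, ← mul_add, hf x]

open Polynomial in
private lemma bch_z0 (q : ℕ) (hq : 4 ≤ q) (K : Type*) [Field K] [Fintype K]
    (hK : Fintype.card K = q ^ 2) : ∃ z : K, z + z ^ q ≠ 0 := by
  by_contra h
  push_neg at h
  have hzero : (X ^ q + X : K[X]) = 0 := by
    apply eq_zero_of_natDegree_lt_card_of_eval_eq_zero _ Function.injective_id
    · intro z
      simp only [eval_add, eval_pow, eval_X, id]
      rw [add_comm]; exact h z
    · have h1 : natDegree (X ^ q + X : K[X]) ≤ q := by
        refine (natDegree_add_le _ _).trans ?_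
        simp only [natDegree_X_pow, natDegree_X, max_le_iff]
        omega
      refine lt_of_le_of_lt h1 ?_
      rw [hK]
      nlinarith
  have hcoe : ((X ^ q + X : K[X]).coeff q) = 1 := by
    rw [coeff_add, coeff_X_pow, if_pos rfl, coeff_X, if_neg (by omega)]; ring
  rw [hzero] at hcoe
  simp at hcoe

private lemma bch_map_apply (q : ℕ) (F K : Type*) [Field F] [Field K] [Fintype K] [Algebra F K]
    [inst : Fintype {x : K // x ^ (q + 1) = 1}] (i : ℤ) (c : {x : K // x ^ (q + 1) = 1} → F) :
    bchMap q F K i c = ∑ u : {x : K // x ^ (q + 1) = 1}, (u : K) ^ i * algebraMap F K (c u) := by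
  rw [bchMap]
  rw [Subsingleton.elim (Fintype.ofFinite _) inst]
  simp [LinearMap.sum_apply, smul_eq_mul]

open Polynomial in
private lemma bch_poly (q δ : ℕ) (hδ : 2 ≤ δ) (h2δ : 2 * δ ≤ q) (K : Type*) [Field K] [Fintype K]
    [Fintype {x : K // x ^ (q + 1) = 1}]
    (hcardU : Fintype.card {x : K // x ^ (q + 1) = 1} = q + 1)
    (a : Fin (δ - 1) → K)
    (h : ∀ u : {x : K // x ^ (q + 1) = 1},
      (∑ j, a j * (u : K) ^ ((j : ℕ) + δ)) + ∑ j, (a j) ^ q * (u : K) ^ (δ - 2 - (j : ℕ)) = 0) :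
    a = 0 := by
  classical
  set P : K[X] := (∑ j : Fin (δ - 1), monomial ((j : ℕ) + δ) (a j)) +
      ∑ j : Fin (δ - 1), monomial (δ - 2 - (j : ℕ)) ((a j) ^ q) with hP
  have hdeg : P.natDegree ≤ 2 * δ - 2 := by
    refine (natDegree_add_le _ _).trans ?_
    rw [max_le_iff]
    constructor <;>
      · refine natDegree_sum_le_of_forall_le _ _ ?_
        intro j _
        refine (natDegree_monomial_le _).trans ?_
        have := j.2
        omega
  have heval : ∀ u : {x : K // x ^ (q + 1) = 1}, P.eval (u : K) = 0 := by
    intro u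
    rw [hP]
    simp only [eval_add, eval_finset_sum, eval_monomial]
    exact h u
  have hP0 : P = 0 := by
    refine eq_zero_of_natDegree_lt_card_of_eval_eq_zero P Subtype.val_injective heval ?_
    rw [hcardU]; omega
  funext j0
  have e1 : (∑ j : Fin (δ - 1), (monomial ((j : ℕ) + δ) (a j))).coeff ((j0 : ℕ) + δ) = a j0 := by
    rw [finset_sum_coeff, Finset.sum_eq_single j0]
    · simp [coeff_monomial]
    · intro b _ hb
      rw [coeff_monomial, if_neg]
      intro hbe
      exact hb (Fin.ext (by omega))
    · simp
  have e2 : (∑ j : Fin (δ - 1), (monomial (δ - 2 - (j : ℕ)) ((a j) ^ q))).coeff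
      ((j0 : ℕ) + δ) = 0 := by
    rw [finset_sum_coeff]
    apply Finset.sum_eq_zero
    intro b _
    rw [coeff_monomial, if_neg]
    omega
  have hc := congrArg (fun Q : K[X] => Q.coeff ((j0 : ℕ) + δ)) hP0
  simp only [hP, coeff_add, coeff_zero] at hc
  rw [e1, e2] at hc
  simpa using hc

theorem stmt_12 (p r m δ q : ℕ) (hp : p.Prime) (hr : 0 < r) (hm : 2 ≤ m)
    (hδ : δ = p ^ r) (hq : q = δ ^ m)
    (F K : Type*) [Field F] [Fintype F] [Field K] [Fintype K] [Algebra F K]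
    (hF : Fintype.card F = q) (hK : Fintype.card K = q ^ 2) :
    Module.finrank F ↥(bchCode q δ F K) = q - 2 * δ + 3 := by
  classical
  have hδ2 : 2 ≤ δ := by
    rw [hδ]
    calc 2 ≤ p := hp.two_le
      _ ≤ p ^ r := Nat.le_self_pow (by omega) p
  have hqδ : δ ^ 2 ≤ q := by rw [hq]; exact Nat.pow_le_pow_right (by omega) hm
  have h2δq : 2 * δ ≤ q := le_trans (by nlinarith) hqδ
  have hq4 : 4 ≤ q := le_trans (by nlinarith) hqδ
  have hqpow : q = p ^ (r * m) := by rw [hq, hδ, ← pow_mul]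
  haveI : Fact p.Prime := ⟨hp⟩
  haveI : CharP K p := bch_charP p r m q hp (by positivity) hqpow K hK
  letI instU : Fintype {x : K // x ^ (q + 1) = 1} := Fintype.ofFinite _
  have hcardU : Fintype.card {x : K // x ^ (q + 1) = 1} = q + 1 := by
    rw [← Nat.card_eq_fintype_card]; exact bch_card_roots K q (by omega) hK
  have hinj : Function.Injective (algebraMap F K) := RingHom.injective _
  have hFq : ∀ a : F, a ^ q = a := fun a => by rw [← hF]; exact FiniteField.pow_card a
  have frobK : ∀ x y : K, (x + y) ^ q = x ^ q + y ^ q := fun x y => by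
    rw [hqpow]; exact add_pow_char_pow x y p (r * m)
  have hsum_pow : ∀ {ι : Type u_2} (s : Finset ι) (f : ι → K),
      (∑ i ∈ s, f i) ^ q = ∑ i ∈ s, f i ^ q := by
    intro ι s f
    rw [hqpow]
    exact sum_pow_char_pow p (r * m) s f
  have hsum_pow0 : ∀ {ι : Type} (s : Finset ι) (f : ι → K),
      (∑ i ∈ s, f i) ^ q = ∑ i ∈ s, f i ^ q := by
    intro ι s f
    rw [hqpow]
    exact sum_pow_char_pow p (r * m) s f
  obtain ⟨t, ht⟩ := bch_trace q hq4 F K hF hK frobK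
  obtain ⟨z0, hz0⟩ := bch_z0 q hq4 K hK
  have tinj : ∀ x : K, x ≠ 0 → (∀ y : K, t (x * y) = 0) → False := by
    intro x hx hy
    have h1 : t z0 = 0 := by
      have h2 := hy (x⁻¹ * z0)
      rwa [mul_inv_cancel_left₀ hx] at h2
    apply hz0
    rw [← ht z0, h1, map_zero]
  set L : ({x : K // x ^ (q + 1) = 1} → F) →ₗ[F] (Fin (δ - 1) → K) :=
    LinearMap.pi (fun j : Fin (δ - 1) => bchMap q F K (((j : ℕ) + 1 : ℕ) : ℤ)) with hL
  have happly : ∀ (i : ℤ) (c : {x : K // x ^ (q + 1) = 1} → F), bchMap q F K i c =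
      ∑ u : {x : K // x ^ (q + 1) = 1}, (u : K) ^ i * algebraMap F K (c u) :=
    fun i c => bch_map_apply q F K i c
  have happlyn : ∀ (k : ℕ) (c : {x : K // x ^ (q + 1) = 1} → F), bchMap q F K (k : ℤ) c =
      ∑ u : {x : K // x ^ (q + 1) = 1}, (u : K) ^ k * algebraMap F K (c u) := by
    intro k c
    rw [happly]
    exact Finset.sum_congr rfl fun u _ => by rw [zpow_natCast]
  have hU0 : ∀ u : {x : K // x ^ (q + 1) = 1}, (u : K) ≠ 0 := by
    intro u h
    have h2 := u.2
    rw [h, zero_pow (by omega : q + 1 ≠ 0)] at h2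
    exact zero_ne_one h2
  have hUpow : ∀ u : {x : K // x ^ (q + 1) = 1}, (u : K) ^ (q + 1) = 1 := fun u => u.2
  have hfrob : ∀ (i : ℤ) (c : {x : K // x ^ (q + 1) = 1} → F),
      bchMap q F K (-i) c = (bchMap q F K i c) ^ q := by
    intro i c
    rw [happly, happly, hsum_pow]
    refine Finset.sum_congr rfl fun u _ => ?_
    rw [mul_pow, ← map_pow, hFq]
    congr 1
    rw [← zpow_natCast ((u : K) ^ i) q, ← zpow_mul]
    have he : i * (q : ℤ) = -i + (((q : ℤ) + 1) * i) := by ring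
    rw [he, zpow_add₀ (hU0 u), zpow_mul]
    have h1 : (u : K) ^ ((q : ℤ) + 1) = 1 := by
      have : ((q : ℤ) + 1) = ((q + 1 : ℕ) : ℤ) := by push_cast; ring
      rw [this, zpow_natCast, hUpow]
    rw [h1, one_zpow, mul_one]
  have hker : bchCode q δ F K = LinearMap.ker L := by
    rw [bchCode]
    apply le_antisymm
    · rw [hL, LinearMap.ker_pi]
      refine le_iInf fun j => ?_
      refine iInf_le_of_le (((j : ℕ) + 1 : ℕ) : ℤ) (iInf_le_of_le ?_ le_rfl)
      simp only [Set.mem_setOf_eq]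
      rw [abs_of_nonneg (by positivity)]
      have hj := j.2
      constructor
      · push_cast; omega
      · push_cast; omega
    · intro c hc
      rw [hL, LinearMap.ker_pi] at hc
      have hpos : ∀ k : ℕ, 1 ≤ k → k ≤ δ - 1 → bchMap q F K (k : ℤ) c = 0 := by
        intro k h1 h2
        have hj : k - 1 < δ - 1 := by omega
        have h3 := (Submodule.mem_iInf _).mp hc ⟨k - 1, hj⟩
        rw [LinearMap.mem_ker] at h3
        have hk : ((k : ℤ)) = (((k - 1 + 1 : ℕ)) : ℤ) := by omega
        rw [hk]
        exact h3
      refine (Submodule.mem_iInf _).mpr fun i => (Submodule.mem_iInf _).mpr fun hi => ?_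
      rw [LinearMap.mem_ker]
      obtain ⟨hi1, hi2⟩ := hi
      rcases le_or_gt 0 i with hsign | hsign
      · rw [abs_of_nonneg hsign] at hi1 hi2
        have h1 : i = ((i.toNat : ℕ) : ℤ) := (Int.toNat_of_nonneg hsign).symm
        rw [h1]
        exact hpos i.toNat (by omega) (by omega)
      · rw [abs_of_neg hsign] at hi1 hi2
        have h1 : i = -(((-i).toNat : ℕ) : ℤ) := by omega
        rw [h1, hfrob]
        rw [hpos (-i).toNat (by omega) (by omega), zero_pow (by omega : q ≠ 0)]
  set B : (Fin (δ - 1) → K) →ₗ[F] (Fin (δ - 1) → K) →ₗ[F] F := LinearMap.mk₂ F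
      (fun a w => ∑ j, t (a j * w j))
      (fun a a' w => by
        simp only [Pi.add_apply, add_mul, map_add, Finset.sum_add_distrib])
      (fun s a w => by
        simp only [Pi.smul_apply, smul_mul_assoc, map_smul, smul_eq_mul, Finset.mul_sum])
      (fun a w w' => by
        simp only [Pi.add_apply, mul_add, map_add, Finset.sum_add_distrib])
      (fun a s w => by
        simp only [Pi.smul_apply, mul_smul_comm, map_smul, smul_eq_mul, Finset.mul_sum]) with hB
  have hBapp : ∀ a w, B a w = ∑ j, t (a j * w j) := fun a w => rfl
  have hBsymm : ∀ a w, B a w = B w a := by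
    intro a w
    simp only [hBapp]
    exact Finset.sum_congr rfl fun j _ => by rw [mul_comm]
  have hBrefl : LinearMap.BilinForm.IsRefl B := by
    intro x y h
    rw [hBsymm]
    exact h
  have horth : LinearMap.BilinForm.orthogonal B (LinearMap.range L) = ⊥ := by
    rw [Submodule.eq_bot_iff]
    intro a ha
    set g : {x : K // x ^ (q + 1) = 1} → F :=
      fun u => t (∑ j : Fin (δ - 1), a j * (u : K) ^ ((j : ℕ) + 1)) with hg
    have hBg : ∀ c, B (L c) a = ∑ u : {x : K // x ^ (q + 1) = 1}, c u * g u := by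
      intro c
      rw [hBapp]
      have hLc : ∀ j : Fin (δ - 1), L c j =
          ∑ u : {x : K // x ^ (q + 1) = 1}, (u : K) ^ ((j : ℕ) + 1) * algebraMap F K (c u) := by
        intro j
        rw [hL, LinearMap.pi_apply, happlyn]
      calc (∑ j, t (L c j * a j))
          = ∑ j, ∑ u : {x : K // x ^ (q + 1) = 1},
              c u * t (a j * (u : K) ^ ((j : ℕ) + 1)) := by
            refine Finset.sum_congr rfl fun j _ => ?_
            rw [hLc j, Finset.sum_mul, map_sum]
            refine Finset.sum_congr rfl fun u _ => ?_
            have he : (u : K) ^ ((j : ℕ) + 1) * algebraMap F K (c u) * a j =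
                c u • (a j * (u : K) ^ ((j : ℕ) + 1)) := by
              rw [Algebra.smul_def]; ring
            rw [he, map_smul, smul_eq_mul]
        _ = ∑ u : {x : K // x ^ (q + 1) = 1}, c u * g u := by
            rw [Finset.sum_comm]
            refine Finset.sum_congr rfl fun u _ => ?_
            rw [← Finset.mul_sum, hg, ← map_sum]
    have hBa : ∀ c, B (L c) a = 0 := fun c =>
      (LinearMap.BilinForm.mem_orthogonal_iff.mp ha) (L c) (LinearMap.mem_range_self L c)
    have hg0 : ∀ u0, g u0 = 0 := by
      intro u0
      have h1 := hBa (Pi.single u0 1)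
      rw [hBg] at h1
      rw [Finset.sum_eq_single u0 (fun b _ hb => by
        rw [Pi.single_apply, if_neg hb, zero_mul]) (by simp)] at h1
      simpa using h1
    have hkey : ∀ u : {x : K // x ^ (q + 1) = 1},
        (∑ j, a j * (u : K) ^ ((j : ℕ) + δ)) +
          ∑ j, (a j) ^ q * (u : K) ^ (δ - 2 - (j : ℕ)) = 0 := by
      intro u
      have h2 : algebraMap F K (g u) = 0 := by rw [hg0 u, map_zero]
      rw [hg, ht] at h2
      have h4 := congrArg (fun z => (u : K) ^ (δ - 1) * z) h2
      simp only [mul_zero] at h4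
      rw [mul_add, Finset.mul_sum] at h4
      rw [hsum_pow0, Finset.mul_sum] at h4
      have e1 : ∀ j : Fin (δ - 1), (u : K) ^ (δ - 1) * (a j * (u : K) ^ ((j : ℕ) + 1)) =
          a j * (u : K) ^ ((j : ℕ) + δ) := by
        intro j
        rw [mul_left_comm, ← pow_add]
        congr 2
        omega
      have e2 : ∀ j : Fin (δ - 1), (u : K) ^ (δ - 1) * ((a j * (u : K) ^ ((j : ℕ) + 1)) ^ q) =
          (a j) ^ q * (u : K) ^ (δ - 2 - (j : ℕ)) := by
        intro j
        have hj := j.2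
        rw [mul_pow, ← pow_mul, mul_left_comm, ← pow_add]
        have hM : (q + 1) * ((j : ℕ) + 1) = ((j : ℕ) + 1) * q + ((j : ℕ) + 1) := by ring
        have hee : δ - 1 + ((j : ℕ) + 1) * q = (δ - 2 - (j : ℕ)) + (q + 1) * ((j : ℕ) + 1) := by
          omega
        rw [hee, pow_add, pow_mul, hUpow, one_pow, mul_one, mul_comm]
      rw [Finset.sum_congr rfl (fun j _ => e1 j), Finset.sum_congr rfl (fun j _ => e2 j)] at h4
      exact h4
    exact bch_poly q δ hδ2 h2δq K hcardU a hkey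
  have hfr2 : Module.finrank F K = 2 := by
    have h := Module.card_eq_pow_finrank (K := F) (V := K)
    rw [hF, hK] at h
    exact (Nat.pow_right_injective (by omega) h.symm)
  have hfrV : Module.finrank F (Fin (δ - 1) → K) = (δ - 1) * 2 := by
    rw [Module.finrank_pi_fintype]
    simp [hfr2, Finset.sum_const, Fintype.card_fin, smul_eq_mul]
  have hfrD : Module.finrank F ({x : K // x ^ (q + 1) = 1} → F) = q + 1 := by
    rw [Module.finrank_fintype_fun_eq_card, hcardU]
  have hrange : Module.finrank F (LinearMap.range L) = (δ - 1) * 2 := by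
    have h1 := LinearMap.BilinForm.finrank_add_finrank_orthogonal hBrefl (LinearMap.range L)
    have h2 : (LinearMap.range L ⊓ LinearMap.BilinForm.orthogonal B ⊤ :
        Submodule F (Fin (δ - 1) → K)) = ⊥ := by
      rw [eq_bot_iff]
      exact le_trans inf_le_right
        (le_trans (LinearMap.BilinForm.orthogonal_le le_top) horth.le)
    rw [horth, h2, finrank_bot, hfrV] at h1
    omega
  have hrn := LinearMap.finrank_range_add_finrank_ker L
  rw [hfrD, hrange] at hrn
  rw [hker]
  omega
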